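/- (l'Hospital-type rule for monotonicity.) Let -∞ ≤ A < B ≤ ∞ and let f, g : (A,B) → ℝ be differentiable with f(A+) = g(A+) = 0. Suppose g and g' are nonvanishing and of constant sign on (A,B), and f'/g' is strictly increasing on (A,B). Then f/g is strictly increasing on (A,B). -/

import Mathlib

open Real Set Filter Topology

private theorem aux15 (A B : EReal) (hAB : A < B) (f g : ℝ → ℝ)
    (S : Set ℝ) (hS : S = {x : ℝ | A < (x : EReal) ∧ (x : EReal) < B})
    (hf : ∀ x ∈ S, DifferentiableAt ℝ f x) (hg : ∀ x ∈ S, DifferentiableAt ℝ g x)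
    (hf0 : Filter.Tendsto f (Filter.comap (fun x : ℝ => (x : EReal))
      (nhdsWithin A {e : EReal | A < e ∧ e < B})) (nhds 0))
    (hg0 : Filter.Tendsto g (Filter.comap (fun x : ℝ => (x : EReal))
      (nhdsWithin A {e : EReal | A < e ∧ e < B})) (nhds 0))
    (hg' : ∀ x ∈ S, 0 < deriv g x)
    (hmono : StrictMonoOn (fun x => deriv f x / deriv g x) S) :
    StrictMonoOn (fun x => f x / g x) S := by
  set L := Filter.comap (fun x : ℝ => (x : EReal))
      (nhdsWithin A {e : EReal | A < e ∧ e < B}) with hL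
  have hSet : {e : EReal | A < e ∧ e < B} = Ioo A B := rfl
  have hmem : ∀ x : ℝ, x ∈ S ↔ A < (x : EReal) ∧ (x : EReal) < B := by
    intro x; rw [hS]; exact Iff.rfl
  have hSopen : IsOpen S := by
    have : S = (fun x : ℝ => (x : EReal)) ⁻¹' (Ioo A B) := by rw [hS]; rfl
    rw [this]
    exact isOpen_Ioo.preimage continuous_coe_real_ereal
  have hScvx : Convex ℝ S := by
    rw [convex_iff_ordConnected]
    refine ⟨fun x hx y hy z hz => ?_⟩
    exact (hmem z).2 ⟨lt_of_lt_of_le ((hmem x).1 hx).1 (EReal.coe_le_coe_iff.2 hz.1),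
      lt_of_le_of_lt (EReal.coe_le_coe_iff.2 hz.2) ((hmem y).1 hy).2⟩
  haveI hNB : L.NeBot := by
    rw [hL, comap_neBot_iff]
    intro t ht
    haveI := left_nhdsWithin_Ioo_neBot (α := EReal) hAB
    have ht2 : t ∩ Ioo A B ∈ 𝓝[Ioo A B] A := inter_mem (by rwa [hSet] at ht) self_mem_nhdsWithin
    obtain ⟨e, het, heI⟩ := Filter.nonempty_of_mem ht2
    have hbot : e ≠ ⊥ := fun h => by simp [h] at heI
    have htop : e ≠ ⊤ := fun h => by
      rw [h] at heI
      exact absurd (lt_of_lt_of_le heI.2 le_top) (lt_irrefl _)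
    exact ⟨e.toReal, by rwa [EReal.coe_toReal htop hbot]⟩
  have hev : ∀ x : ℝ, x ∈ S → ∀ᶠ a in L, a ∈ S ∧ a < x := by
    intro x hx
    have h1 : Ioo A B ∈ 𝓝[Ioo A B] A := self_mem_nhdsWithin
    have h2 : Iio (x : EReal) ∈ 𝓝[Ioo A B] A :=
      nhdsWithin_le_nhds (Iio_mem_nhds ((hmem x).1 hx).1)
    rw [hL]
    have hm : (fun x : ℝ => (x : EReal)) ⁻¹' (Ioo A B ∩ Iio (x : EReal)) ∈
        Filter.comap (fun x : ℝ => (x : EReal)) (nhdsWithin A {e : EReal | A < e ∧ e < B}) := by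
      rw [hSet]
      exact preimage_mem_comap (inter_mem h1 h2)
    filter_upwards [hm] with a ha
    exact ⟨(hmem a).2 ⟨ha.1.1, ha.1.2⟩, EReal.coe_lt_coe_iff.1 ha.2⟩
  have contf : ContinuousOn f S := fun x hx => (hf x hx).continuousAt.continuousWithinAt
  have contg : ContinuousOn g S := fun x hx => (hg x hx).continuousAt.continuousWithinAt
  have gmono : StrictMonoOn g S := strictMonoOn_of_deriv_pos hScvx contg
    (fun x hx => hg' x (by rwa [hSopen.interior_eq] at hx))
  have gnonneg : ∀ x ∈ S, 0 ≤ g x := by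
    intro x hx
    refine le_of_tendsto hg0 ?_
    filter_upwards [hev x hx] with a ha
    exact (gmono ha.1 hx ha.2).le
  have gpos : ∀ x ∈ S, 0 < g x := by
    intro x hx
    obtain ⟨m, hmS, hmx⟩ := (hev x hx).exists
    exact lt_of_le_of_lt (gnonneg m hmS) (gmono hmS hx hmx)
  have ratio_le : ∀ x ∈ S, ∀ m ∈ S, m < x → f m / g m ≤ deriv f x / deriv g x := by
    intro x hx m hm hmx
    have hgm : (0:ℝ) < g m := gpos m hm
    have htend : Tendsto (fun a => (f m - f a) / (g m - g a)) L (𝓝 (f m / g m)) := by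
      have h := ((tendsto_const_nhds (x := f m)).sub hf0).div
        ((tendsto_const_nhds (x := g m)).sub hg0) (by simpa using hgm.ne')
      simp at h; exact h
    refine le_of_tendsto htend ?_
    filter_upwards [hev m hm] with a ha
    obtain ⟨haS, ham⟩ := ha
    have hsub : Icc a m ⊆ S := hScvx.ordConnected.out haS hm
    obtain ⟨c, hc, hcc⟩ := exists_ratio_deriv_eq_ratio_slope (f := f) (g := g) (hab := ham)
      (hfc := fun y hy => contf.mono hsub y hy)
      (hgc := fun y hy => contg.mono hsub y hy)
      (hfd := fun y hy => (hf y (hsub (Ioo_subset_Icc_self hy))).differentiableWithinAt)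
      (hgd := fun y hy => (hg y (hsub (Ioo_subset_Icc_self hy))).differentiableWithinAt)
    have hcS : c ∈ S := hsub (Ioo_subset_Icc_self hc)
    have hgc' : 0 < deriv g c := hg' c hcS
    have hgd : 0 < g m - g a := sub_pos.2 (gmono haS hm ham)
    have heq : (f m - f a) / (g m - g a) = deriv f c / deriv g c := by
      rw [div_eq_div_iff hgd.ne' hgc'.ne']
      linarith [hcc]
    rw [heq]
    exact (hmono hcS hx (lt_trans hc.2 hmx)).le
  have key : ∀ x ∈ S, f x / g x < deriv f x / deriv g x := by
    intro x hx
    obtain ⟨m, hmS, hmx⟩ := (hev x hx).exists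
    have h1 : f m / g m ≤ deriv f x / deriv g x := ratio_le x hx m hmS hmx
    have hsub : Icc m x ⊆ S := hScvx.ordConnected.out hmS hx
    obtain ⟨c, hc, hcc⟩ := exists_ratio_deriv_eq_ratio_slope (f := f) (g := g) (hab := hmx)
      (hfc := fun y hy => contf.mono hsub y hy)
      (hgc := fun y hy => contg.mono hsub y hy)
      (hfd := fun y hy => (hf y (hsub (Ioo_subset_Icc_self hy))).differentiableWithinAt)
      (hgd := fun y hy => (hg y (hsub (Ioo_subset_Icc_self hy))).differentiableWithinAt)
    have hcS : c ∈ S := hsub (Ioo_subset_Icc_self hc)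
    have hq1 : 0 < g m := gpos m hmS
    have hq2 : 0 < g x - g m := sub_pos.2 (gmono hmS hx hmx)
    have h2 : (f x - f m) / (g x - g m) < deriv f x / deriv g x := by
      have heq : (f x - f m) / (g x - g m) = deriv f c / deriv g c := by
        rw [div_eq_div_iff hq2.ne' (hg' c hcS).ne']
        linarith [hcc]
      rw [heq]
      exact hmono hcS hx hc.2
    have e1 : f m ≤ deriv f x / deriv g x * g m := (div_le_iff₀ hq1).1 h1
    have e2 : f x - f m < deriv f x / deriv g x * (g x - g m) := (div_lt_iff₀ hq2).1 h2
    rw [div_lt_iff₀ (gpos x hx)]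
    nlinarith [e1, e2]
  refine strictMonoOn_of_deriv_pos hScvx
    (fun x hx => ((hf x hx).div (hg x hx) (gpos x hx).ne').continuousAt.continuousWithinAt) ?_
  intro x hx
  rw [hSopen.interior_eq] at hx
  rw [deriv_fun_div (hf x hx) (hg x hx) (gpos x hx).ne']
  have h := (div_lt_div_iff₀ (gpos x hx) (hg' x hx)).1 (key x hx)
  exact div_pos (by linarith) (pow_pos (gpos x hx) 2)

theorem stmt15 (A B : EReal) (hAB : A < B) (f g : ℝ → ℝ)
    (S : Set ℝ) (hS : S = {x : ℝ | A < (x : EReal) ∧ (x : EReal) < B})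
    (hf : ∀ x ∈ S, DifferentiableAt ℝ f x) (hg : ∀ x ∈ S, DifferentiableAt ℝ g x)
    (hf0 : Filter.Tendsto f (Filter.comap (fun x : ℝ => (x : EReal))
      (nhdsWithin A {e : EReal | A < e ∧ e < B})) (nhds 0))
    (hg0 : Filter.Tendsto g (Filter.comap (fun x : ℝ => (x : EReal))
      (nhdsWithin A {e : EReal | A < e ∧ e < B})) (nhds 0))
    (hgne : (∀ x ∈ S, 0 < g x) ∨ (∀ x ∈ S, g x < 0))
    (hg'ne : (∀ x ∈ S, 0 < deriv g x) ∨ (∀ x ∈ S, deriv g x < 0))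
    (hmono : StrictMonoOn (fun x => deriv f x / deriv g x) S) :
    StrictMonoOn (fun x => f x / g x) S := by
  rcases hg'ne with hpos | hneg
  · exact aux15 A B hAB f g S hS hf hg hf0 hg0 hpos hmono
  · have h := aux15 A B hAB (fun x => -f x) (fun x => -g x) S hS
      (fun x hx => (hf x hx).neg) (fun x hx => (hg x hx).neg)
      (by simpa using hf0.neg) (by simpa using hg0.neg)
      (fun x hx => by rw [deriv.fun_neg]; linarith [hneg x hx])
      (by
        have heq : (fun x => deriv (fun y => -f y) x / deriv (fun y => -g y) x)
            = fun x => deriv f x / deriv g x := by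
          funext x; rw [deriv.fun_neg, deriv.fun_neg, neg_div_neg_eq]
        rw [heq]; exact hmono)
    have heq : (fun x => (-f x) / (-g x)) = fun x => f x / g x := by
      funext x; rw [neg_div_neg_eq]
    rwa [heq] at h
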